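/- Let (Ω, ℱ_0 ⊆ ℱ_1 ⊆ … ⊆ ℱ_N, P) be a filtered probability space and (x_n)_{n=0}^N an adapted ℝ^d-valued process such that for each n = 1,…,N there exists an ℱ_n-measurable random variable γ_n > 0 with E[γ_n | ℱ_{n-1}] = 1 and x_{n-1} = E[γ_n x_n | ℱ_{n-1}] a.s. Then the measure Q' with density dQ'/dP = ∏_{k=1}^N γ_k is a probability measure equivalent to P under which x is a generalized martingale: x_{n-1} = E_{Q'}[x_n | ℱ_{n-1}] a.s. for all n. -/

import Mathlib

open MeasureTheory Finset
open scoped ENNReal NNReal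

private lemma coord_abs_le_norm {d : ℕ} (v : EuclideanSpace ℝ (Fin d)) (i : Fin d) :
    |v i| ≤ ‖v‖ := by
  rw [EuclideanSpace.norm_eq, ← Real.sqrt_sq_eq_abs]
  apply Real.sqrt_le_sqrt
  have h := Finset.single_le_sum (f := fun j => ‖v j‖ ^ 2)
    (fun j _ => sq_nonneg _) (Finset.mem_univ i)
  simpa [Real.norm_eq_abs, sq_abs] using h

/-- If `x` is adapted and for each `n` there is an `ℱ n`-measurable `γ n > 0` with
`E[γ n | ℱ (n-1)] = 1` and `x (n-1) = E[γ n • x n | ℱ (n-1)]` a.s., then the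
measure `Q'` with density `∏_{k=1}^N γ k` is a probability measure equivalent to
`P` under which `x` is a martingale: `x (n-1) = E_{Q'}[x n | ℱ (n-1)]` a.s. -/
theorem equivalent_martingale_measure_from_densities
    {Ω : Type*} {mΩ : MeasurableSpace Ω} {P : Measure Ω} [IsProbabilityMeasure P]
    {d N : ℕ} (ℱ : ℕ → MeasurableSpace Ω) (hmono : Monotone ℱ) (hle : ∀ n, ℱ n ≤ mΩ)
    (x : ℕ → Ω → EuclideanSpace ℝ (Fin d))
    (hadapted : ∀ n, n ≤ N → Measurable[ℱ n] (x n))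
    (γ : ℕ → Ω → ℝ)
    (hγmeas : ∀ n, 1 ≤ n → n ≤ N → Measurable[ℱ n] (γ n))
    (hγpos : ∀ n, 1 ≤ n → n ≤ N → ∀ᵐ ω ∂P, 0 < γ n ω)
    (hγint : ∀ n, 1 ≤ n → n ≤ N → Integrable (γ n) P)
    (hγcond : ∀ n, 1 ≤ n → n ≤ N → P[γ n | ℱ (n - 1)] =ᵐ[P] fun _ => (1 : ℝ))
    (hγxint : ∀ n, 1 ≤ n → n ≤ N → Integrable (fun ω => γ n ω • x n ω) P)
    (hrep : ∀ n, 1 ≤ n → n ≤ N →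
      x (n - 1) =ᵐ[P] P[fun ω => γ n ω • x n ω | ℱ (n - 1)])
    (Q' : @Measure Ω mΩ)
    (hQ' : Q' = P.withDensity (fun ω => ENNReal.ofReal (∏ k ∈ Icc 1 N, γ k ω)))
    (hxQ' : ∀ n, n ≤ N → Integrable (x n) Q') :
    IsProbabilityMeasure Q' ∧ Q' ≪ P ∧ P ≪ Q' ∧
      ∀ n, 1 ≤ n → n ≤ N → x (n - 1) =ᵐ[Q'] Q'[x n | ℱ (n - 1)] := by
  classical
  -- ambient measurability of the densities
  have hγM : ∀ k, 1 ≤ k → k ≤ N → Measurable (γ k) :=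
    fun k h1 h2 => (hγmeas k h1 h2).mono (hle k) le_rfl
  -- joint a.e. positivity
  have hpos : ∀ᵐ ω ∂P, ∀ k, k ∈ Icc 1 N → 0 < γ k ω := by
    rw [ae_all_iff]
    intro k
    by_cases hk : k ∈ Icc 1 N
    · filter_upwards [hγpos k (mem_Icc.mp hk).1 (mem_Icc.mp hk).2] with ω h _
      exact h
    · filter_upwards with ω h
      exact absurd h hk
  -- measurability of partial products w.r.t. the filtration
  have hprodm : ∀ j, j ≤ N → Measurable[ℱ j] fun ω => ∏ k ∈ Icc 1 j, γ k ω := by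
    intro j hj
    exact Finset.measurable_prod _ fun k hk =>
      (hγmeas k (mem_Icc.mp hk).1 (le_trans (mem_Icc.mp hk).2 hj)).mono
        (hmono (mem_Icc.mp hk).2) le_rfl
  -- key : removing the last density does not change the measure on the previous σ-algebra
  have key : ∀ m j, j + 1 = m → m ≤ N →
      (P.withDensity fun ω => ENNReal.ofReal (γ m ω)).trim (hle j) = P.trim (hle j) := by
    intro m j hjm hmN
    have h1m : 1 ≤ m := by omega
    have hj : m - 1 = j := by omega
    refine @Measure.ext Ω (ℱ j) _ _ fun s hs => ?_
    rw [trim_measurableSet_eq (hle j) hs, trim_measurableSet_eq (hle j) hs]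
    have hsΩ : MeasurableSet s := hle j s hs
    have hint : Integrable (γ m) (P.restrict s) := (hγint m h1m hmN).restrict
    have hnn : 0 ≤ᵐ[P.restrict s] γ m :=
      ae_restrict_of_ae ((hγpos m h1m hmN).mono fun ω h => h.le)
    have hcond := hγcond m h1m hmN
    have hs' : MeasurableSet[ℱ (m - 1)] s := by rw [hj]; exact hs
    calc (P.withDensity fun ω => ENNReal.ofReal (γ m ω)) s
        = ∫⁻ ω in s, ENNReal.ofReal (γ m ω) ∂P := withDensity_apply _ hsΩ
      _ = ENNReal.ofReal (∫ ω in s, γ m ω ∂P) :=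
          (ofReal_integral_eq_lintegral_ofReal hint hnn).symm
      _ = ENNReal.ofReal (∫ ω in s, (P[γ m|ℱ (m - 1)]) ω ∂P) := by
          rw [setIntegral_condExp (hle (m - 1)) (hγint m h1m hmN) hs']
      _ = ENNReal.ofReal (∫ ω in s, (1 : ℝ) ∂P) := by
          rw [setIntegral_congr_ae hsΩ (hcond.mono fun ω h _ => h)]
      _ = P s := by
          rw [setIntegral_const, smul_eq_mul, mul_one,
            ofReal_measureReal (measure_ne_top P s)]
  -- the total mass of the partial products is 1
  have lint : ∀ m, m ≤ N → ∫⁻ ω, ∏ k ∈ Icc 1 m, ENNReal.ofReal (γ k ω) ∂P = 1 := by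
    intro m
    induction m with
    | zero => intro _; simp
    | succ m ih =>
      intro hm
      have hm' : m ≤ N := by omega
      have hZm : Measurable[ℱ m] fun ω => ∏ k ∈ Icc 1 m, ENNReal.ofReal (γ k ω) :=
        Finset.measurable_prod _ fun k hk =>
          ((hγmeas k (mem_Icc.mp hk).1 (le_trans (mem_Icc.mp hk).2 hm')).mono
            (hmono (mem_Icc.mp hk).2) le_rfl).ennreal_ofReal
      have hZM : Measurable fun ω => ∏ k ∈ Icc 1 m, ENNReal.ofReal (γ k ω) :=
        hZm.mono (hle m) le_rfl
      have hγ1 : Measurable fun ω => ENNReal.ofReal (γ (m + 1) ω) :=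
        (hγM (m + 1) (by omega) hm).ennreal_ofReal
      have step : (fun ω => ∏ k ∈ Icc 1 (m + 1), ENNReal.ofReal (γ k ω)) =
          fun ω => ENNReal.ofReal (γ (m + 1) ω) * ∏ k ∈ Icc 1 m, ENNReal.ofReal (γ k ω) := by
        funext ω
        rw [Finset.prod_Icc_succ_top (Nat.le_add_left 1 m), mul_comm]
      calc ∫⁻ ω, ∏ k ∈ Icc 1 (m + 1), ENNReal.ofReal (γ k ω) ∂P
          = ∫⁻ ω, ENNReal.ofReal (γ (m + 1) ω) * ∏ k ∈ Icc 1 m, ENNReal.ofReal (γ k ω) ∂P := by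
            rw [step]
        _ = ∫⁻ ω, ∏ k ∈ Icc 1 m, ENNReal.ofReal (γ k ω)
              ∂(P.withDensity fun ω => ENNReal.ofReal (γ (m + 1) ω)) := by
            rw [lintegral_withDensity_eq_lintegral_mul P hγ1 hZM]; rfl
        _ = ∫⁻ ω, ∏ k ∈ Icc 1 m, ENNReal.ofReal (γ k ω)
              ∂((P.withDensity fun ω => ENNReal.ofReal (γ (m + 1) ω)).trim (hle m)) :=
            (lintegral_trim (hle m) hZm).symm
        _ = ∫⁻ ω, ∏ k ∈ Icc 1 m, ENNReal.ofReal (γ k ω) ∂(P.trim (hle m)) := by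
            rw [key (m + 1) m rfl hm]
        _ = ∫⁻ ω, ∏ k ∈ Icc 1 m, ENNReal.ofReal (γ k ω) ∂P := lintegral_trim (hle m) hZm
        _ = 1 := ih hm'
  -- Q' is a probability measure
  have hprob : IsProbabilityMeasure Q' := by
    constructor
    rw [hQ', withDensity_apply _ MeasurableSet.univ, Measure.restrict_univ]
    have hae : (fun ω => ENNReal.ofReal (∏ k ∈ Icc 1 N, γ k ω)) =ᵐ[P]
        fun ω => ∏ k ∈ Icc 1 N, ENNReal.ofReal (γ k ω) := by
      filter_upwards [hpos] with ω h
      exact ENNReal.ofReal_prod_of_nonneg fun k hk => (h k hk).le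
    rw [lintegral_congr_ae hae]
    exact lint N le_rfl
  have hQP : Q' ≪ P := hQ' ▸ withDensity_absolutelyContinuous P _
  have hPQ : P ≪ Q' := by
    rw [hQ']
    refine withDensity_absolutelyContinuous'
      (((hprodm N le_rfl).mono (hle N) le_rfl).ennreal_ofReal).aemeasurable ?_
    filter_upwards [hpos] with ω h
    simp only [ne_eq, ENNReal.ofReal_eq_zero, not_le]
    exact Finset.prod_pos fun k hk => h k hk
  -- Bochner transfer lemma
  have bochner : ∀ m j, j + 1 = m → m ≤ N → ∀ h : Ω → EuclideanSpace ℝ (Fin d),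
      StronglyMeasurable[ℱ j] h → Integrable (fun ω => γ m ω • h ω) P →
      Integrable h P ∧ ∫ ω, γ m ω • h ω ∂P = ∫ ω, h ω ∂P := by
    intro m j hjm hmN h hsm hint
    have h1m : 1 ≤ m := by omega
    have hnn : ∀ᵐ ω ∂P, 0 ≤ γ m ω := (hγpos m h1m hmN).mono fun ω hw => hw.le
    have htnn : AEMeasurable (fun ω => (γ m ω).toNNReal) P :=
      (measurable_real_toNNReal.comp (hγM m h1m hmN)).aemeasurable
    have hdens : (P.withDensity fun ω => ENNReal.ofReal (γ m ω)) =
        P.withDensity fun ω => ((γ m ω).toNNReal : ℝ≥0∞) := rfl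
    have hsmul : (fun ω => (γ m ω).toNNReal • h ω) =ᵐ[P] fun ω => γ m ω • h ω := by
      filter_upwards [hnn] with ω hw
      simp [NNReal.smul_def, Real.coe_toNNReal _ hw]
    have hintν : Integrable h (P.withDensity fun ω => ENNReal.ofReal (γ m ω)) := by
      rw [hdens, integrable_withDensity_iff_integrable_smul₀ htnn]
      exact hint.congr hsmul.symm
    have htrim := key m j hjm hmN
    have hintP : Integrable h P :=
      integrable_of_integrable_trim (hle j) (htrim ▸ hintν.trim (hle j) hsm)
    refine ⟨hintP, ?_⟩
    have e1 : ∫ ω, h ω ∂(P.withDensity fun ω => ENNReal.ofReal (γ m ω)) =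
        ∫ ω, (γ m ω).toNNReal • h ω ∂P := by
      rw [hdens]
      exact integral_withDensity_eq_integral_smul₀ htnn h
    have e2 : ∫ ω, h ω ∂(P.withDensity fun ω => ENNReal.ofReal (γ m ω)) = ∫ ω, h ω ∂P := by
      calc ∫ ω, h ω ∂(P.withDensity fun ω => ENNReal.ofReal (γ m ω))
          = ∫ ω, h ω ∂((P.withDensity fun ω => ENNReal.ofReal (γ m ω)).trim (hle j)) :=
            integral_trim (hle j) hsm
        _ = ∫ ω, h ω ∂(P.trim (hle j)) := by rw [htrim]
        _ = ∫ ω, h ω ∂P := (integral_trim (hle j) hsm).symm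
    rw [← integral_congr_ae hsmul, ← e1, e2]
  -- main claim : integrals w.r.t. Q' of ℱ j-measurable functions
  have claimD : ∀ t j, j + t = N → ∀ f : Ω → EuclideanSpace ℝ (Fin d),
      StronglyMeasurable[ℱ j] f → Integrable f Q' →
      Integrable (fun ω => (∏ k ∈ Icc 1 j, γ k ω) • f ω) P ∧
      ∫ ω, (∏ k ∈ Icc 1 j, γ k ω) • f ω ∂P = ∫ ω, f ω ∂Q' := by
    intro t
    induction t with
    | zero =>
      intro j hj f hsm hfQ
      have hjN : j = N := by omega
      subst hjN
      have hnnP : ∀ᵐ ω ∂P, 0 ≤ ∏ k ∈ Icc 1 j, γ k ω := by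
        filter_upwards [hpos] with ω h
        exact Finset.prod_nonneg fun k hk => (h k hk).le
      have htnn : AEMeasurable (fun ω => (∏ k ∈ Icc 1 j, γ k ω).toNNReal) P :=
        (measurable_real_toNNReal.comp ((hprodm j le_rfl).mono (hle j) le_rfl)).aemeasurable
      have hdens : Q' = P.withDensity fun ω => ((∏ k ∈ Icc 1 j, γ k ω).toNNReal : ℝ≥0∞) := hQ'
      have hsmul : (fun ω => (∏ k ∈ Icc 1 j, γ k ω).toNNReal • f ω) =ᵐ[P]
          fun ω => (∏ k ∈ Icc 1 j, γ k ω) • f ω := by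
        filter_upwards [hnnP] with ω hw
        simp [NNReal.smul_def, Real.coe_toNNReal _ hw]
      rw [hdens, integrable_withDensity_iff_integrable_smul₀ htnn] at hfQ
      constructor
      · exact hfQ.congr hsmul
      · rw [hdens, integral_withDensity_eq_integral_smul₀ htnn f, ← integral_congr_ae hsmul]
    | succ t ih =>
      intro j hj f hsm hfQ
      have hj1 : (j + 1) + t = N := by omega
      have hsm' : StronglyMeasurable[ℱ (j + 1)] f := hsm.mono (hmono (Nat.le_succ j))
      obtain ⟨hint1, heq1⟩ := ih (j + 1) hj1 f hsm' hfQ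
      have hzj : StronglyMeasurable[ℱ j] fun ω => (∏ k ∈ Icc 1 j, γ k ω) • f ω :=
        ((hprodm j (by omega)).stronglyMeasurable).smul hsm
      have hrw : (fun ω => (∏ k ∈ Icc 1 (j + 1), γ k ω) • f ω)
          = fun ω => γ (j + 1) ω • ((∏ k ∈ Icc 1 j, γ k ω) • f ω) := by
        funext ω
        rw [Finset.prod_Icc_succ_top (Nat.le_add_left 1 j), smul_smul, mul_comm]
      rw [hrw] at hint1 heq1
      obtain ⟨hint2, heq2⟩ := bochner (j + 1) j rfl (by omega) _ hzj hint1
      refine ⟨hint2, ?_⟩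
      rw [← heq2]
      exact heq1
  -- set-integral version of the main claim
  have setid : ∀ j, j ≤ N → ∀ f : Ω → EuclideanSpace ℝ (Fin d),
      StronglyMeasurable[ℱ j] f → Integrable f Q' → ∀ s : Set Ω, MeasurableSet[ℱ j] s →
      ∫ ω in s, (∏ k ∈ Icc 1 j, γ k ω) • f ω ∂P = ∫ ω in s, f ω ∂Q' := by
    intro j hj f hsm hfQ s hs
    have hsΩ : MeasurableSet s := hle j s hs
    have hind := claimD (N - j) j (by omega) (s.indicator f) (hsm.indicator hs)
      (hfQ.indicator hsΩ)
    have e1 : ∫ ω in s, (∏ k ∈ Icc 1 j, γ k ω) • f ω ∂P =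
        ∫ ω, (∏ k ∈ Icc 1 j, γ k ω) • s.indicator f ω ∂P := by
      rw [← integral_indicator hsΩ]
      exact integral_congr_ae (Filter.Eventually.of_forall fun ω => by
        by_cases hω : ω ∈ s <;> simp [Set.indicator_apply, hω])
    have e2 : ∫ ω in s, f ω ∂Q' = ∫ ω, s.indicator f ω ∂Q' := (integral_indicator hsΩ).symm
    rw [e1, e2]
    exact hind.2
  refine ⟨hprob, hQP, hPQ, ?_⟩
  intro n h1n hnN
  haveI := hprob
  have hm : ℱ (n - 1) ≤ mΩ := hle (n - 1)
  have hn' : n - 1 + 1 = n := by omega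
  have hsm_n : StronglyMeasurable[ℱ n] (x n) := (hadapted n hnN).stronglyMeasurable
  have hsm_p : StronglyMeasurable[ℱ (n - 1)] (x (n - 1)) :=
    (hadapted (n - 1) (by omega)).stronglyMeasurable
  have hG_int : Integrable (fun ω => γ n ω • x n ω) P := hγxint n h1n hnN
  have hznxn_int : Integrable (fun ω => (∏ k ∈ Icc 1 n, γ k ω) • x n ω) P :=
    (claimD (N - n) n (by omega) (x n) hsm_n (hxQ' n hnN)).1
  have hzpxp_int : Integrable (fun ω => (∏ k ∈ Icc 1 (n - 1), γ k ω) • x (n - 1) ω) P :=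
    (claimD (N - (n - 1)) (n - 1) (by omega) (x (n - 1)) hsm_p (hxQ' (n - 1) (by omega))).1
  have hxp_int : Integrable (x (n - 1)) P := integrable_condExp.congr (hrep n h1n hnN).symm
  have hxnM : Measurable (x n) := (hadapted n hnN).mono (hle n) le_rfl
  have hxpM : Measurable (x (n - 1)) := (hadapted (n - 1) (by omega)).mono (hle (n - 1)) le_rfl
  have hzp_sm : StronglyMeasurable[ℱ (n - 1)] fun ω => ∏ k ∈ Icc 1 (n - 1), γ k ω :=
    (hprodm (n - 1) (by omega)).stronglyMeasurable
  -- the middle step : pull-out of the conditional expectation, coordinatewise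
  have claimMid : ∀ s : Set Ω, MeasurableSet[ℱ (n - 1)] s →
      ∫ ω in s, (∏ k ∈ Icc 1 n, γ k ω) • x n ω ∂P =
      ∫ ω in s, (∏ k ∈ Icc 1 (n - 1), γ k ω) • x (n - 1) ω ∂P := by
    intro s hs
    have hsΩ : MeasurableSet s := hm s hs
    have hprodid : ∀ ω, (∏ k ∈ Icc 1 n, γ k ω) =
        (∏ k ∈ Icc 1 (n - 1), γ k ω) * γ n ω := by
      intro ω
      conv_lhs => rw [← hn']
      rw [Finset.prod_Icc_succ_top (Nat.le_add_left 1 (n - 1)), hn']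
    refine PiLp.ext fun i => ?_
    -- coordinate i
    have hxni_M : Measurable fun ω => x n ω i :=
      ((EuclideanSpace.proj (𝕜 := ℝ) i).continuous.measurable).comp hxnM
    have hxpi_M : Measurable fun ω => x (n - 1) ω i :=
      ((EuclideanSpace.proj (𝕜 := ℝ) i).continuous.measurable).comp hxpM
    have hGi_int : Integrable (fun ω => γ n ω * x n ω i) P := by
      refine hG_int.mono ((hγM n h1n hnN).mul hxni_M).aestronglyMeasurable ?_
      filter_upwards with ω
      rw [Real.norm_eq_abs, abs_mul, norm_smul, Real.norm_eq_abs]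
      exact mul_le_mul_of_nonneg_left (coord_abs_le_norm _ i) (abs_nonneg _)
    have hxpi_int : Integrable (fun ω => x (n - 1) ω i) P := by
      refine hxp_int.mono hxpi_M.aestronglyMeasurable ?_
      filter_upwards with ω
      rw [Real.norm_eq_abs]
      exact coord_abs_le_norm _ i
    -- conditional expectation of the coordinate
    have hGi_cond : (fun ω => x (n - 1) ω i) =ᵐ[P] P[fun ω => γ n ω * x n ω i|ℱ (n - 1)] := by
      refine ae_eq_condExp_of_forall_setIntegral_eq hm hGi_int
        (fun s' hs' _ => hxpi_int.integrableOn) (fun s' hs' _ => ?_)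
        (((EuclideanSpace.proj (𝕜 := ℝ) i).continuous.comp_stronglyMeasurable
          hsm_p).aestronglyMeasurable)
      have hs'Ω : MeasurableSet s' := hm s' hs'
      have hv : ∫ ω in s', x (n - 1) ω ∂P = ∫ ω in s', γ n ω • x n ω ∂P := by
        rw [setIntegral_congr_ae hs'Ω ((hrep n h1n hnN).mono fun ω h _ => h)]
        exact setIntegral_condExp hm hG_int hs'
      have hv' := congrArg (EuclideanSpace.proj (𝕜 := ℝ) i) hv
      rw [← ContinuousLinearMap.integral_comp_comm _ hxp_int.integrableOn,
        ← ContinuousLinearMap.integral_comp_comm _ hG_int.integrableOn] at hv'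
      exact hv'
    -- pull-out
    have hfg_int : Integrable ((fun ω => ∏ k ∈ Icc 1 (n - 1), γ k ω) *
        fun ω => γ n ω * x n ω i) P := by
      refine hznxn_int.mono ?_ ?_
      · exact ((((hprodm (n - 1) (by omega)).mono (hle (n - 1)) le_rfl)).mul
          ((hγM n h1n hnN).mul hxni_M)).aestronglyMeasurable
      · filter_upwards with ω
        simp only [Pi.mul_apply]
        rw [Real.norm_eq_abs, ← mul_assoc, ← hprodid ω, abs_mul, norm_smul, Real.norm_eq_abs]
        exact mul_le_mul_of_nonneg_left (coord_abs_le_norm _ i) (abs_nonneg _)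
    have hpull := condExp_mul_of_stronglyMeasurable_left (m := ℱ (n - 1)) (μ := P) hzp_sm
      hfg_int hGi_int
    -- the coordinatewise computation
    calc (∫ ω in s, (∏ k ∈ Icc 1 n, γ k ω) • x n ω ∂P) i
        = ∫ ω in s, (∏ k ∈ Icc 1 (n - 1), γ k ω) * (γ n ω * x n ω i) ∂P := by
          rw [show ((∫ ω in s, (∏ k ∈ Icc 1 n, γ k ω) • x n ω ∂P) i =
              (EuclideanSpace.proj (𝕜 := ℝ) i) (∫ ω in s, (∏ k ∈ Icc 1 n, γ k ω) • x n ω ∂P))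
              from rfl, ← ContinuousLinearMap.integral_comp_comm _ hznxn_int.integrableOn]
          refine integral_congr_ae (Filter.Eventually.of_forall fun ω => ?_)
          show (∏ k ∈ Icc 1 n, γ k ω) * x n ω i = _
          rw [hprodid ω, mul_assoc]
      _ = ∫ ω in s, (P[(fun ω => ∏ k ∈ Icc 1 (n - 1), γ k ω) *
            (fun ω => γ n ω * x n ω i)|ℱ (n - 1)]) ω ∂P := by
          rw [setIntegral_condExp hm hfg_int hs]
          rfl
      _ = ∫ ω in s, (∏ k ∈ Icc 1 (n - 1), γ k ω) * x (n - 1) ω i ∂P := by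
          refine setIntegral_congr_ae hsΩ ?_
          filter_upwards [hpull, hGi_cond] with ω h1 h2 _
          rw [h1]
          simp only [Pi.mul_apply]
          rw [← h2]
      _ = (∫ ω in s, (∏ k ∈ Icc 1 (n - 1), γ k ω) • x (n - 1) ω ∂P) i := by
          rw [show ((∫ ω in s, (∏ k ∈ Icc 1 (n - 1), γ k ω) • x (n - 1) ω ∂P) i =
              (EuclideanSpace.proj (𝕜 := ℝ) i)
                (∫ ω in s, (∏ k ∈ Icc 1 (n - 1), γ k ω) • x (n - 1) ω ∂P)) from rfl,
            ← ContinuousLinearMap.integral_comp_comm _ hzpxp_int.integrableOn]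
          exact integral_congr_ae (Filter.Eventually.of_forall fun ω => rfl)
  -- conclusion
  refine ae_eq_condExp_of_forall_setIntegral_eq hm (hxQ' n hnN)
    (fun s hs _ => (hxQ' (n - 1) (by omega)).integrableOn) (fun s hs _ => ?_)
    hsm_p.aestronglyMeasurable
  have h1 := setid n hnN (x n) hsm_n (hxQ' n hnN) s (hmono (by omega : n - 1 ≤ n) s hs)
  have h2 := setid (n - 1) (by omega) (x (n - 1)) hsm_p (hxQ' (n - 1) (by omega)) s hs
  rw [← h1, ← h2]
  exact (claimMid s hs).symm
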